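/- Let C be a code from the coset construction with subspace distance d, i.e., C consists of row spaces of matrices [[A, φ_B(F)],[0, B]] with τ^{-1}(A) ∈ A_i, τ^{-1}(B) ∈ B_i for 1 ≤ i ≤ l and F ∈ F̄, and assume the minimum subspace distance of C is at least d. Then for every index i, the minimum subspace distance within A_i is at least d, and the minimum subspace distance within B_i is at least d. -/

import Mathlib

open Module

/-- A full-rank `k × n` matrix is in reduced row echelon form with pivot columns
given by the strictly increasing list `c` if the pivot columns form an identity
submatrix and all entries to the left of each pivot are zero. -/
def IsRRE {F : Type*} [Field F] {k n : ℕ} (A : Matrix (Fin k) (Fin n) F)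
    (c : Fin k → Fin n) : Prop :=
  StrictMono c ∧ (∀ i j, A i (c j) = if j = i then 1 else 0) ∧
    (∀ (i : Fin k) (j : Fin n), (j : ℕ) < (c i : ℕ) → A i j = 0)

/-- The row space of a matrix: the span of its rows. -/
def rowSpace {F : Type*} [Field F] {k n : ℕ} (A : Matrix (Fin k) (Fin n) F) :
    Submodule F (Fin n → F) :=
  Submodule.span F (Set.range fun i => A i)

open scoped Classical in
/-- `insertZeroCols c M` is `φ_B(M)`: the matrix obtained from `M` by inserting zero
columns at the pivot positions (given by `c`) of a full-rank RRE matrix `B` with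
`kb` rows and `nb` columns. -/
noncomputable def insertZeroCols {F : Type*} [Field F] {k' kb nb : ℕ}
    (c : Fin kb → Fin nb) (M : Matrix (Fin k') (Fin (nb - kb)) F) :
    Matrix (Fin k') (Fin nb) F :=
  Matrix.of fun i j =>
    if ∃ t, c t = j then 0
    else if h : (j : ℕ) - (Finset.univ.filter fun t : Fin kb => (c t : ℕ) ≤ (j : ℕ)).card
        < nb - kb then
      M i ⟨_, h⟩
    else 0

/-- The subspace distance `d_S(U,W) = dim U + dim W - 2 dim (U ⊓ W)`. -/
noncomputable def subspaceDist {F : Type*} [Field F] {V : Type*} [AddCommGroup V]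
    [Module F V] (U W : Submodule F V) : ℕ :=
  finrank F U + finrank F W - 2 * finrank F ↥(U ⊓ W)

/-- Row space of a matrix with arbitrary row and column index types. -/
def rowSpace' {F : Type*} [Field F] {ρ ι : Type*} (A : Matrix ρ ι F) :
    Submodule F (ι → F) :=
  Submodule.span F (Set.range fun i => A i)


section AuxLemmas

open Module

variable {F M N : Type*} [Field F] [AddCommGroup M] [AddCommGroup N] [Module F M] [Module F N]

private def prodEquivSub (p : Submodule F M) (q : Submodule F N) :
    ↥(p.prod q) ≃ₗ[F] (↥p × ↥q) where
  toFun x := (⟨x.1.1, (Submodule.mem_prod.mp x.2).1⟩, ⟨x.1.2, (Submodule.mem_prod.mp x.2).2⟩)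
  invFun x := ⟨(x.1.1, x.2.1), Submodule.mem_prod.mpr ⟨x.1.2, x.2.2⟩⟩
  left_inv _ := rfl
  right_inv _ := rfl
  map_add' _ _ := rfl
  map_smul' _ _ := rfl

private theorem finrank_submodule_prod [FiniteDimensional F M] [FiniteDimensional F N]
    (p : Submodule F M) (q : Submodule F N) :
    finrank F ↥(p.prod q) = finrank F p + finrank F q := by
  rw [(prodEquivSub p q).finrank_eq, Module.finrank_prod]

private theorem prod_inf_prod' (p p' : Submodule F M) (q q' : Submodule F N) :
    p.prod q ⊓ p'.prod q' = (p ⊓ p').prod (q ⊓ q') := by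
  ext x
  simp only [Submodule.mem_inf, Submodule.mem_prod]
  tauto

private theorem subspaceDist_prod_left [FiniteDimensional F M] [FiniteDimensional F N]
    (p p' : Submodule F M) (q : Submodule F N) :
    subspaceDist (p.prod q) (p'.prod q) = subspaceDist p p' := by
  unfold subspaceDist
  rw [prod_inf_prod', finrank_submodule_prod, finrank_submodule_prod, inf_idem,
    finrank_submodule_prod]
  omega

private theorem subspaceDist_prod_right [FiniteDimensional F M] [FiniteDimensional F N]
    (p : Submodule F M) (q q' : Submodule F N) :
    subspaceDist (p.prod q) (p.prod q') = subspaceDist q q' := by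
  unfold subspaceDist
  rw [prod_inf_prod', finrank_submodule_prod, finrank_submodule_prod, inf_idem,
    finrank_submodule_prod]
  omega

private theorem prod_left_eq {p p' : Submodule F M} {q q' : Submodule F N}
    (h : p.prod q = p'.prod q') : p = p' := by
  ext x
  constructor <;> intro hx
  · have h1 : (x, (0 : N)) ∈ p.prod q := Submodule.mem_prod.mpr ⟨hx, Submodule.zero_mem _⟩
    rw [h] at h1
    exact (Submodule.mem_prod.mp h1).1
  · have h1 : (x, (0 : N)) ∈ p'.prod q' := Submodule.mem_prod.mpr ⟨hx, Submodule.zero_mem _⟩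
    rw [← h] at h1
    exact (Submodule.mem_prod.mp h1).1

private theorem prod_right_eq {p p' : Submodule F M} {q q' : Submodule F N}
    (h : p.prod q = p'.prod q') : q = q' := by
  ext x
  constructor <;> intro hx
  · have h1 : ((0 : M), x) ∈ p.prod q := Submodule.mem_prod.mpr ⟨Submodule.zero_mem _, hx⟩
    rw [h] at h1
    exact (Submodule.mem_prod.mp h1).2
  · have h1 : ((0 : M), x) ∈ p'.prod q' := Submodule.mem_prod.mpr ⟨Submodule.zero_mem _, hx⟩
    rw [← h] at h1
    exact (Submodule.mem_prod.mp h1).2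

private theorem subspaceDist_map {W : Type*} [AddCommGroup W] [Module F W]
    (e : M ≃ₗ[F] W) (p q : Submodule F M) :
    subspaceDist (p.map (e : M →ₗ[F] W)) (q.map (e : M →ₗ[F] W)) = subspaceDist p q := by
  unfold subspaceDist
  rw [← Submodule.map_inf (e : M →ₗ[F] W) e.injective, LinearEquiv.finrank_map_eq,
    LinearEquiv.finrank_map_eq, LinearEquiv.finrank_map_eq]

end AuxLemmas

private theorem insertZeroCols_zero {F : Type*} [Field F] {k' kb nb : ℕ}
    (c : Fin kb → Fin nb) :
    insertZeroCols c (0 : Matrix (Fin k') (Fin (nb - kb)) F) = 0 := by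
  ext i j
  simp only [insertZeroCols, Matrix.of_apply, Matrix.zero_apply]
  split_ifs <;> simp

private theorem map_rowSpace'_fromBlocks {F : Type*} [Field F] {k1 k2 n1 n2 : ℕ}
    (A : Matrix (Fin k1) (Fin n1) F) (B : Matrix (Fin k2) (Fin n2) F) :
    Submodule.map
      ((LinearEquiv.sumArrowLequivProdArrow (Fin n1) (Fin n2) F F :
        ((Fin n1 ⊕ Fin n2) → F) ≃ₗ[F] ((Fin n1 → F) × (Fin n2 → F))) :
        ((Fin n1 ⊕ Fin n2) → F) →ₗ[F] ((Fin n1 → F) × (Fin n2 → F)))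
      (rowSpace' (Matrix.fromBlocks A 0 0 B)) = (rowSpace A).prod (rowSpace B) := by
  rw [rowSpace', Submodule.map_span, ← Set.range_comp]
  have hr : ((LinearEquiv.sumArrowLequivProdArrow (Fin n1) (Fin n2) F F :
        ((Fin n1 ⊕ Fin n2) → F) →ₗ[F] ((Fin n1 → F) × (Fin n2 → F))) ∘
          fun i => Matrix.fromBlocks A 0 0 B i)
      = Sum.elim (fun i => (LinearMap.inl F (Fin n1 → F) (Fin n2 → F)) (A i))
                 (fun i => (LinearMap.inr F (Fin n1 → F) (Fin n2 → F)) (B i)) := by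
    funext i
    cases i with
    | inl i =>
      refine Prod.ext ?_ ?_ <;> funext j <;>
        simp [LinearEquiv.sumArrowLequivProdArrow, Equiv.sumArrowEquivProdArrow,
          Matrix.fromBlocks]
    | inr i =>
      refine Prod.ext ?_ ?_ <;> funext j <;>
        simp [LinearEquiv.sumArrowLequivProdArrow, Equiv.sumArrowEquivProdArrow,
          Matrix.fromBlocks]
  rw [hr, Set.Sum.elim_range,
    show (fun i => (LinearMap.inl F (Fin n1 → F) (Fin n2 → F)) (A i))
      = ⇑(LinearMap.inl F (Fin n1 → F) (Fin n2 → F)) ∘ (fun i => A i) from rfl,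
    show (fun i => (LinearMap.inr F (Fin n1 → F) (Fin n2 → F)) (B i))
      = ⇑(LinearMap.inr F (Fin n1 → F) (Fin n2 → F)) ∘ (fun i => B i) from rfl,
    Set.range_comp, Set.range_comp, LinearMap.span_inl_union_inr]
  rfl

theorem exists_isRRE {F : Type*} [Field F] {k n : ℕ} (U : Submodule F (Fin n → F))
    (hU : finrank F U = k) :
    ∃ (A : Matrix (Fin k) (Fin n) F) (c : Fin k → Fin n), IsRRE A c ∧ rowSpace A = U := by
  classical
  set S : Finset (Fin n) :=
    Finset.univ.filter (fun j => ∃ v, v ∈ U ∧ (∀ j' : Fin n, j' < j → v j' = 0) ∧ v j ≠ 0)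
    with hS
  have hmemS : ∀ j : Fin n, j ∈ S ↔
      ∃ v, v ∈ U ∧ (∀ j' : Fin n, j' < j → v j' = 0) ∧ v j ≠ 0 := by
    intro j; simp [hS]
  -- leading position
  have lead : ∀ v : Fin n → F, v ∈ U → v ≠ 0 →
      ∃ p ∈ S, v p ≠ 0 ∧ ∀ j' : Fin n, j' < p → v j' = 0 := by
    intro v hv hv0
    have hne : (Finset.univ.filter fun j => v j ≠ 0).Nonempty := by
      rcases Function.ne_iff.mp hv0 with ⟨j, hj⟩
      exact ⟨j, by simpa using hj⟩
    set p := (Finset.univ.filter fun j => v j ≠ 0).min' hne with hp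
    have hpmem := (Finset.univ.filter fun j => v j ≠ 0).min'_mem hne
    have hvp : v p ≠ 0 := by
      have := Finset.mem_filter.mp hpmem
      exact this.2
    have hleft : ∀ j' : Fin n, j' < p → v j' = 0 := by
      intro j' hj'
      by_contra h
      have : p ≤ j' := Finset.min'_le _ _ (by simp [h])
      exact absurd hj' (not_lt.mpr this)
    exact ⟨p, (hmemS p).mpr ⟨v, hv, hleft, hvp⟩, hvp, hleft⟩
  let φ : U →ₗ[F] ({x // x ∈ S} → F) :=
    (LinearMap.funLeft F F (fun s : {x // x ∈ S} => (s : Fin n))).comp U.subtype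
  have hφ : ∀ (v : U) (s : {x // x ∈ S}), φ v s = (v : Fin n → F) (s : Fin n) := fun v s => rfl
  have hφinj : Function.Injective φ := by
    refine LinearMap.ker_eq_bot.mp ?_
    refine (Submodule.eq_bot_iff _).mpr ?_
    intro v hv
    by_contra h0
    have hv0 : (v : Fin n → F) ≠ 0 := fun h => h0 (Subtype.ext h)
    obtain ⟨p, hpS, hvp, -⟩ := lead (v : Fin n → F) v.2 hv0
    have : φ v ⟨p, hpS⟩ = 0 := by rw [LinearMap.mem_ker.mp hv]; rfl
    exact hvp this
  have h1 : k ≤ S.card := by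
    have := LinearMap.finrank_le_finrank_of_injective hφinj
    rwa [hU, Module.finrank_fintype_fun_eq_card, Fintype.card_coe] at this
  have h2 : S.card ≤ k := by
    have hw : ∀ s : {x // x ∈ S}, ∃ v, v ∈ U ∧
        (∀ j' : Fin n, j' < (s : Fin n) → v j' = 0) ∧ v (s : Fin n) ≠ 0 :=
      fun s => (hmemS (s : Fin n)).mp s.2
    choose w hwU hwleft hwne using hw
    have hliw : LinearIndependent F w := by
      rw [Fintype.linearIndependent_iff]
      intro g hg
      by_contra hgs
      push_neg at hgs
      obtain ⟨s, hs⟩ := hgs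
      have hne : (Finset.univ.filter fun t => g t ≠ 0).Nonempty := ⟨s, by simp [hs]⟩
      set t0 := (Finset.univ.filter fun t => g t ≠ 0).min' hne with ht0
      have ht0mem := (Finset.univ.filter fun t => g t ≠ 0).min'_mem hne
      have hgt0 : g t0 ≠ 0 := (Finset.mem_filter.mp ht0mem).2
      have hev := congrFun hg ((t0 : Fin n))
      rw [Finset.sum_apply] at hev
      have hsum : ∀ t ∈ Finset.univ, t ≠ t0 → (g t • w t) ((t0 : Fin n)) = 0 := by
        intro t _ htne
        by_cases hgt : g t = 0
        · simp [hgt]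
        · have ht : t ∈ Finset.univ.filter fun t => g t ≠ 0 := by simp [hgt]
          have hle : t0 ≤ t := Finset.min'_le _ _ ht
          have hlt : t0 < t := lt_of_le_of_ne hle (Ne.symm htne)
          have : ((t0 : Fin n)) < ((t : Fin n)) := hlt
          simp [Pi.smul_apply, hwleft t _ this]
      rw [Finset.sum_eq_single t0 hsum (by simp)] at hev
      simp only [Pi.smul_apply, smul_eq_mul, Pi.zero_apply] at hev
      exact hgt0 (by
        rcases mul_eq_zero.mp hev with h | h
        · exact h
        · exact absurd h (hwne t0))
    have hli : LinearIndependent F (fun s : {x // x ∈ S} => (⟨w s, hwU s⟩ : U)) :=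
      LinearIndependent.of_comp U.subtype hliw
    have := hli.fintype_card_le_finrank
    rwa [Fintype.card_coe, hU] at this
  have hcard : S.card = k := le_antisymm h2 h1
  set so := S.orderIsoOfFin hcard with hso
  set c : Fin k → Fin n := fun i => ((so i : {x // x ∈ S}) : Fin n) with hc
  have hcmono : StrictMono c := fun a b h => Subtype.coe_lt_coe.mpr (so.strictMono h)
  have hdim : finrank F U = finrank F ({x // x ∈ S} → F) := by
    rw [hU, Module.finrank_fintype_fun_eq_card, Fintype.card_coe, hcard]
  set e : U ≃ₗ[F] ({x // x ∈ S} → F) := φ.linearEquivOfInjective hφinj hdim with he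
  have heφ : ∀ v : U, e v = φ v := fun v => rfl
  set b : Fin k → U := fun i => e.symm (Pi.single (so i) 1 : {x // x ∈ S} → F) with hb
  set A : Matrix (Fin k) (Fin n) F := Matrix.of fun i => ((b i : Fin n → F)) with hA
  have hkey : ∀ (i : Fin k) (s : {x // x ∈ S}),
      (b i : Fin n → F) (s : Fin n) = (Pi.single (so i) 1 : {x // x ∈ S} → F) s := by
    intro i s
    have h1 : φ (b i) = (Pi.single (so i) 1 : {x // x ∈ S} → F) := by
      rw [← heφ]; exact e.apply_symm_apply _
    exact congrFun h1 s
  refine ⟨A, c, ⟨hcmono, ?_, ?_⟩, ?_⟩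
  · intro i j
    have := hkey i (so j)
    rw [Pi.single_apply] at this
    have h2 : A i (c j) = if so j = so i then (1 : F) else 0 := this
    rw [h2]
    by_cases h : j = i
    · simp [h]
    · simp [h, fun hh => h (so.injective hh)]
  · intro i j hj
    by_contra h0
    have hbne : (b i : Fin n → F) ≠ 0 := by
      intro h
      apply h0
      show (b i : Fin n → F) j = 0
      rw [h]; rfl
    obtain ⟨p, hpS, hvp, hpleft⟩ := lead (b i : Fin n → F) (b i).2 hbne
    have hps : (⟨p, hpS⟩ : {x // x ∈ S}) = so i := by
      by_contra hne
      apply hvp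
      have := hkey i ⟨p, hpS⟩
      rw [Pi.single_apply, if_neg hne] at this
      exact this
    have hpc : (p : ℕ) = ((c i : Fin n) : ℕ) :=
      congrArg (fun x : {x // x ∈ S} => ((x : Fin n) : ℕ)) hps
    have hjp : j < p := by
      rw [Fin.lt_def, hpc]
      exact hj
    exact h0 (hpleft j hjp)
  · apply le_antisymm
    · rw [rowSpace, Submodule.span_le]
      rintro x ⟨i, rfl⟩
      exact (b i).2
    · intro v hv
      have hrep : (⟨v, hv⟩ : U) = ∑ i, v (c i) • b i := by
        apply hφinj
        funext s
        obtain ⟨i0, hi0⟩ := so.surjective s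
        have hrhs : φ (∑ i, v (c i) • b i) s = ∑ i, v (c i) * ((b i : Fin n → F) (s : Fin n)) := by
          rw [map_sum, Finset.sum_apply]
          exact Finset.sum_congr rfl fun i _ => by rw [map_smul]; rfl
        rw [hrhs]
        rw [Finset.sum_eq_single i0]
        · rw [hkey i0 s, ← hi0, Pi.single_apply, if_pos rfl, mul_one, hφ]
        · intro t _ htne
          rw [hkey t s, ← hi0, Pi.single_apply,
            if_neg (fun hh => htne (so.injective hh).symm), mul_zero]
        · simp
      have hrep' : v = ∑ i, v (c i) • (b i : Fin n → F) := by
        have := congrArg (Subtype.val) hrep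
        simpa using this
      rw [hrep']
      exact Submodule.sum_mem _ fun i _ =>
        Submodule.smul_mem _ _ (Submodule.subset_span ⟨i, rfl⟩)

/-- If the code obtained from the coset construction has minimum subspace distance
at least `d`, then every part `𝒜 i` and every part `ℬ i` has minimum subspace
distance at least `d`. -/
theorem coset_parts_minDist {F : Type*} [Field F] [Fintype F] {n k n' k' l d : ℕ}
    (hk : 1 ≤ k) (hkn : 2 * k ≤ n) (hk' : 1 ≤ k') (hk'n' : k' ≤ n')
    (hkk' : 1 ≤ k - k') (hkn' : k - k' ≤ n - n')
    (𝒜 : Fin l → Set (Submodule F (Fin n' → F)))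
    (ℬ : Fin l → Set (Submodule F (Fin (n - n') → F)))
    (Fbar : Set (Matrix (Fin k') (Fin ((n - n') - (k - k'))) F))
    (h𝒜ne : ∀ i, (𝒜 i).Nonempty) (hℬne : ∀ i, (ℬ i).Nonempty)
    (h𝒜dim : ∀ i, ∀ U ∈ 𝒜 i, finrank F U = k')
    (hℬdim : ∀ i, ∀ V ∈ ℬ i, finrank F V = k - k')
    (hF0 : (0 : Matrix (Fin k') (Fin ((n - n') - (k - k'))) F) ∈ Fbar)
    (C : Set (Submodule F ((Fin n' ⊕ Fin (n - n')) → F)))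
    (hC : C = {W | ∃ (i : Fin l) (A : Matrix (Fin k') (Fin n') F)
        (ca : Fin k' → Fin n') (B : Matrix (Fin (k - k')) (Fin (n - n')) F)
        (cb : Fin (k - k') → Fin (n - n'))
        (M : Matrix (Fin k') (Fin ((n - n') - (k - k'))) F),
        IsRRE A ca ∧ IsRRE B cb ∧ rowSpace A ∈ 𝒜 i ∧ rowSpace B ∈ ℬ i ∧ M ∈ Fbar ∧
          W = rowSpace' (Matrix.fromBlocks A (insertZeroCols cb M) 0 B)})
    (hdist : ∀ U ∈ C, ∀ W ∈ C, U ≠ W → d ≤ subspaceDist U W) :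
    ∀ i : Fin l,
      (∀ U ∈ 𝒜 i, ∀ U' ∈ 𝒜 i, U ≠ U' → d ≤ subspaceDist U U') ∧
      (∀ V ∈ ℬ i, ∀ V' ∈ ℬ i, V ≠ V' → d ≤ subspaceDist V V') := by
  intro i
  classical
  set ε : ((Fin n' ⊕ Fin (n - n')) → F) ≃ₗ[F] ((Fin n' → F) × (Fin (n - n') → F)) :=
    LinearEquiv.sumArrowLequivProdArrow (Fin n') (Fin (n - n')) F F with hε
  set εl : ((Fin n' ⊕ Fin (n - n')) → F) →ₗ[F] ((Fin n' → F) × (Fin (n - n') → F)) :=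
    (ε : ((Fin n' ⊕ Fin (n - n')) → F) →ₗ[F] ((Fin n' → F) × (Fin (n - n') → F))) with hεl
  have hdmap : ∀ P Q : Submodule F ((Fin n' ⊕ Fin (n - n')) → F),
      subspaceDist (Submodule.map εl P) (Submodule.map εl Q) = subspaceDist P Q :=
    fun P Q => subspaceDist_map ε P Q
  have build : ∀ (UA : Submodule F (Fin n' → F)), UA ∈ 𝒜 i →
      ∀ (VB : Submodule F (Fin (n - n') → F)), VB ∈ ℬ i →
      ∃ W ∈ C, Submodule.map εl W = UA.prod VB := by
    intro UA hUA VB hVB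
    obtain ⟨A, ca, hA, hAr⟩ := exists_isRRE UA (h𝒜dim i UA hUA)
    obtain ⟨B, cb, hB, hBr⟩ := exists_isRRE VB (hℬdim i VB hVB)
    refine ⟨rowSpace' (Matrix.fromBlocks A (insertZeroCols cb 0) 0 B), ?_, ?_⟩
    · rw [hC]
      exact ⟨i, A, ca, B, cb, 0, hA, hB, by rw [hAr]; exact hUA, by rw [hBr]; exact hVB,
        hF0, rfl⟩
    · rw [hεl, hε, insertZeroCols_zero, map_rowSpace'_fromBlocks, hAr, hBr]
  constructor
  · intro U hU U' hU' hne
    obtain ⟨V, hV⟩ := hℬne i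
    obtain ⟨W, hW, hWm⟩ := build U hU V hV
    obtain ⟨W', hW', hWm'⟩ := build U' hU' V hV
    have hWne : W ≠ W' := by
      intro h
      rw [h] at hWm
      exact hne (prod_left_eq (hWm.symm.trans hWm'))
    calc d ≤ subspaceDist W W' := hdist W hW W' hW' hWne
      _ = subspaceDist (Submodule.map εl W) (Submodule.map εl W') := (hdmap W W').symm
      _ = subspaceDist (U.prod V) (U'.prod V) := by rw [hWm, hWm']
      _ = subspaceDist U U' := subspaceDist_prod_left U U' V
  · intro V hV V' hV' hne
    obtain ⟨U, hU⟩ := h𝒜ne i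
    obtain ⟨W, hW, hWm⟩ := build U hU V hV
    obtain ⟨W', hW', hWm'⟩ := build U hU V' hV'
    have hWne : W ≠ W' := by
      intro h
      rw [h] at hWm
      exact hne (prod_right_eq (hWm.symm.trans hWm'))
    calc d ≤ subspaceDist W W' := hdist W hW W' hW' hWne
      _ = subspaceDist (Submodule.map εl W) (Submodule.map εl W') := (hdmap W W').symm
      _ = subspaceDist (U.prod V) (U.prod V') := by rw [hWm, hWm']
      _ = subspaceDist V V' := subspaceDist_prod_right U V V'
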